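/- Let γ ∈ (0,1), let s = ⌈√(2/γ)⌉, and let v ∈ ℝ^d with ‖v‖ ≤ 1. (a) For every x ∈ ℝ^d with ‖x‖ ≤ 1 and ⟨v, x⟩ ≥ γ, one has 1 − ⟨v, x⟩ ∈ [0, 1] and hence |T_s(1 − ⟨v, x⟩)| ≤ 1. (b) For every x ∈ ℝ^d with ‖x‖ ≤ 1 and ⟨v, x⟩ ≤ −γ, one has T_s(1 − ⟨v, x⟩) ≥ 1 + s²γ ≥ 3, where T_s denotes the s-th Chebyshev polynomial of the first kind. -/
import Mathlib

open RealInnerProductSpace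

lemma cheb_lower (x : ℝ) (hx : 1 ≤ x) (n : ℕ) :
    (Polynomial.Chebyshev.T ℝ (n : ℤ)).eval x ≥ 1 + (n : ℝ) ^ 2 * (x - 1) ∧
    (Polynomial.Chebyshev.T ℝ ((n : ℤ) + 1)).eval x -
      (Polynomial.Chebyshev.T ℝ (n : ℤ)).eval x ≥ (2 * n + 1) * (x - 1) := by
  induction n with
  | zero =>
    constructor <;> simp [Polynomial.Chebyshev.T_zero, Polynomial.Chebyshev.T_one] <;> linarith
  | succ n ih =>
    obtain ⟨h1, h2⟩ := ih
    have hT1 : (Polynomial.Chebyshev.T ℝ ((n : ℤ) + 1)).eval x ≥ 1 := by nlinarith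
    have hrec := Polynomial.Chebyshev.T_add_two ℝ (n : ℤ)
    have hrec' : (Polynomial.Chebyshev.T ℝ ((n : ℤ) + 2)).eval x =
        2 * x * (Polynomial.Chebyshev.T ℝ ((n : ℤ) + 1)).eval x -
        (Polynomial.Chebyshev.T ℝ (n : ℤ)).eval x := by
      rw [hrec]; simp
    constructor
    · push_cast; nlinarith
    · push_cast
      have : ((n : ℤ) + 1 + 1 : ℤ) = (n : ℤ) + 2 := by ring
      rw [this, hrec']
      nlinarith

/-- Let `γ ∈ (0,1)`, `s = ⌈√(2/γ)⌉` and `‖v‖ ≤ 1`.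
(a) If `‖x‖ ≤ 1` and `⟨v,x⟩ ≥ γ`, then `1 − ⟨v,x⟩ ∈ [0,1]` and `|T_s(1 − ⟨v,x⟩)| ≤ 1`.
(b) If `‖x‖ ≤ 1` and `⟨v,x⟩ ≤ −γ`, then `T_s(1 − ⟨v,x⟩) ≥ 1 + s²γ ≥ 3`. -/
theorem chebyshev_comp_inner_bounds {d : ℕ} (γ : ℝ) (hγ : γ ∈ Set.Ioo (0 : ℝ) 1)
    (s : ℕ) (hs : s = ⌈Real.sqrt (2 / γ)⌉₊)
    (v : EuclideanSpace ℝ (Fin d)) (hv : ‖v‖ ≤ 1) :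
    (∀ x : EuclideanSpace ℝ (Fin d), ‖x‖ ≤ 1 → ⟪v, x⟫ ≥ γ →
      (1 - ⟪v, x⟫) ∈ Set.Icc (0 : ℝ) 1 ∧
      |(Polynomial.Chebyshev.T ℝ (s : ℤ)).eval (1 - ⟪v, x⟫)| ≤ 1) ∧
    (∀ x : EuclideanSpace ℝ (Fin d), ‖x‖ ≤ 1 → ⟪v, x⟫ ≤ -γ →
      (Polynomial.Chebyshev.T ℝ (s : ℤ)).eval (1 - ⟪v, x⟫) ≥ 1 + (s : ℝ) ^ 2 * γ ∧
      1 + (s : ℝ) ^ 2 * γ ≥ 3) := by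
  obtain ⟨hγ0, hγ1⟩ := hγ
  have hs2 : (s : ℝ) ^ 2 * γ ≥ 2 := by
    have h1 : Real.sqrt (2 / γ) ≤ (s : ℝ) := by rw [hs]; exact Nat.le_ceil _
    have h0 : (0 : ℝ) ≤ Real.sqrt (2 / γ) := Real.sqrt_nonneg _
    have hsq : 2 / γ ≤ (s : ℝ) ^ 2 := by
      have := Real.sq_sqrt (by positivity : (0:ℝ) ≤ 2 / γ)
      nlinarith
    rw [ge_iff_le, ← div_le_iff₀ hγ0] at *
    linarith [hsq]
  constructor
  · intro x hx hvx
    have hle : ⟪v, x⟫ ≤ 1 := le_trans (real_inner_le_norm v x)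
      (by nlinarith [norm_nonneg v, norm_nonneg x])
    have ht0 : (0 : ℝ) ≤ 1 - ⟪v, x⟫ := by linarith
    have ht1 : 1 - ⟪v, x⟫ ≤ 1 := by linarith
    refine ⟨⟨ht0, ht1⟩, ?_⟩
    have hcos : Real.cos (Real.arccos (1 - ⟪v, x⟫)) = 1 - ⟪v, x⟫ :=
      Real.cos_arccos (by linarith) ht1
    rw [← hcos, Polynomial.Chebyshev.T_real_cos]
    exact Real.abs_cos_le_one _
  · intro x hx hvx
    have hx1 : (1 : ℝ) ≤ 1 - ⟪v, x⟫ := by linarith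
    have := (cheb_lower (1 - ⟪v, x⟫) hx1 s).1
    constructor
    · have : (s : ℝ) ^ 2 * γ ≤ (s : ℝ) ^ 2 * (1 - ⟪v, x⟫ - 1) := by nlinarith
      linarith [(cheb_lower (1 - ⟪v, x⟫) hx1 s).1]
    · linarith
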